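/- Geometrization Theorem: For every k-QSAT interaction hypergraph G on N qubits with clauses S_1, …, S_M there is an integer R_G such that (i) for every choice of clause vectors φ = (φ_1, …, φ_M), dim ker H_φ ≥ R_G, and (ii) the set of choices φ for which dim ker H_φ > R_G is contained in the zero locus of a nonzero polynomial in the real and imaginary parts of the components of the φ_m (in particular it has Lebesgue measure zero). Equivalently, the rank of H_φ equals its maximal possible value 2^N − R_G for almost every choice of φ. -/

import Mathlib

open scoped BigOperators

noncomputable section

/-- The matrix of the rank-one projector `|φ⟩⟨φ|` acting on the qubits in the
`k`-element set `S` and as the identity on the remaining qubits. -/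
def clauseProj {N : ℕ} (S : Finset (Fin N)) (φ : ({i // i ∈ S} → Fin 2) → ℂ) :
    Matrix (Fin N → Fin 2) (Fin N → Fin 2) ℂ :=
  fun σ τ =>
    (if ∀ i : Fin N, i ∉ S → σ i = τ i then (1 : ℂ) else 0) *
      φ (fun i => σ i.1) * (starRingEnd ℂ) (φ (fun i => τ i.1))

/-- The `k`-QSAT Hamiltonian `H_φ = ∑ m, Π_m` associated to the interaction
hypergraph `S : Fin M → Finset (Fin N)` and the clause vectors `φ m`. -/
def qsatHam {N M : ℕ} (S : Fin M → Finset (Fin N))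
    (φ : ∀ m, ({i // i ∈ S m} → Fin 2) → ℂ) :
    Matrix (Fin N → Fin 2) (Fin N → Fin 2) ℂ :=
  ∑ m, clauseProj (S m) (φ m)

/-- `φ` is a unit vector. -/
def IsUnitVec {α : Type*} [Fintype α] (φ : α → ℂ) : Prop :=
  ∑ x, Complex.normSq (φ x) = 1

/-- The dimension of the zero-energy eigenspace `ker H_φ`. -/
def kerDim {N M : ℕ} (S : Fin M → Finset (Fin N))
    (φ : ∀ m, ({i // i ∈ S m} → Fin 2) → ℂ) : ℕ :=
  Module.finrank ℂ (LinearMap.ker (Matrix.mulVecLin (qsatHam S φ)))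

/-- The real coordinates (real and imaginary parts of all components) of the
family of clause vectors `φ`. -/
def coords {N M : ℕ} (S : Fin M → Finset (Fin N))
    (φ : ∀ m, ({i // i ∈ S m} → Fin 2) → ℂ) :
    ((Σ m : Fin M, ({i // i ∈ S m} → Fin 2)) × Bool) → ℝ :=
  fun v => if v.2 then (φ v.1.1 v.1.2).re else (φ v.1.1 v.1.2).im

/-! ### Auxiliary results on characteristic polynomials of Hermitian matrices -/

open Matrix Polynomial in
lemma aux_charmatrix_diagonal {n : Type*} [Fintype n] [DecidableEq n] (d : n → ℂ) :
    charmatrix (Matrix.diagonal d) = Matrix.diagonal fun i => (X : ℂ[X]) - C (d i) := by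
  ext i j
  by_cases h : i = j
  · subst h; simp
  · simp [charmatrix_apply_ne _ _ _ h, Matrix.diagonal_apply_ne _ h]

open Matrix Polynomial in
lemma aux_charpoly_hermitian {n : Type*} [Fintype n] [DecidableEq n]
    {A : Matrix n n ℂ} (hA : A.IsHermitian) :
    A.charpoly = ∏ i, ((X : ℂ[X]) - C (RCLike.ofReal (hA.eigenvalues i))) := by
  set U : Matrix n n ℂ := (hA.eigenvectorUnitary : Matrix n n ℂ) with hUdef
  have hU1 : U * star U = 1 := mem_unitaryGroup_iff.mp hA.eigenvectorUnitary.2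
  set D : Matrix n n ℂ := Matrix.diagonal ((RCLike.ofReal ∘ hA.eigenvalues : n → ℂ)) with hD
  have hspec : A = U * D * star U := hA.spectral_theorem
  set f : Matrix n n ℂ →+* Matrix n n ℂ[X] := (Polynomial.C : ℂ →+* ℂ[X]).mapMatrix with hf
  have hcomm : f U * Matrix.scalar n (X : ℂ[X]) * f (star U) = Matrix.scalar n (X : ℂ[X]) := by
    rw [← (Matrix.scalar_commute (X : ℂ[X]) (fun r => Commute.all _ r) (f U)).eq,
      mul_assoc, ← _root_.map_mul, hU1, _root_.map_one, mul_one]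
  have hchar : charmatrix A = f U * charmatrix D * f (star U) := by
    rw [charmatrix, charmatrix, hspec]
    have h3 : f (U * D * star U) = f U * f D * f (star U) := by
      rw [_root_.map_mul, _root_.map_mul]
    rw [show (Polynomial.C : ℂ →+* ℂ[X]).mapMatrix = f from rfl, h3, mul_sub, sub_mul, hcomm]
  have hdet : A.charpoly = D.charpoly := by
    rw [Matrix.charpoly, Matrix.charpoly, hchar, Matrix.det_mul, Matrix.det_mul]
    have h2 : (f U).det * (f (star U)).det = 1 := by
      rw [← Matrix.det_mul, ← _root_.map_mul, hU1, _root_.map_one, Matrix.det_one]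
    rw [mul_comm (f U).det (charmatrix D).det, mul_assoc, h2, mul_one]
  rw [hdet, hD, Matrix.charpoly, aux_charmatrix_diagonal, Matrix.det_diagonal]
  simp [Function.comp]

open Matrix in
lemma aux_kerdim_eq {n : Type*} [Fintype n] [DecidableEq n]
    {A : Matrix n n ℂ} (hA : A.IsHermitian) :
    Module.finrank ℂ (LinearMap.ker A.mulVecLin) =
      (Finset.univ.filter fun i => hA.eigenvalues i = 0).card := by
  classical
  have h1 := LinearMap.finrank_range_add_finrank_ker A.mulVecLin
  have h2 : A.rank = Fintype.card {i // hA.eigenvalues i ≠ 0} := hA.rank_eq_card_non_zero_eigs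
  have h3 : Module.finrank ℂ (n → ℂ) = Fintype.card n := Module.finrank_fintype_fun_eq_card ℂ
  rw [h3] at h1
  have h4 : A.rank = Module.finrank ℂ (LinearMap.range A.mulVecLin) := rfl
  have h5 : Fintype.card {i // hA.eigenvalues i ≠ 0} =
      (Finset.univ.filter fun i => ¬ hA.eigenvalues i = 0).card := Fintype.card_subtype _
  have h6 := Finset.card_filter_add_card_filter_not (s := (Finset.univ : Finset n))
    (p := fun i => hA.eigenvalues i = 0)
  simp only [Finset.card_univ] at h6
  omega

open Matrix Polynomial in
lemma aux_coeff_hermitian {n : Type*} [Fintype n] [DecidableEq n]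
    {A : Matrix n n ℂ} (hA : A.IsHermitian) :
    (∀ j, j < Module.finrank ℂ (LinearMap.ker A.mulVecLin) → A.charpoly.coeff j = 0) ∧
      A.charpoly.coeff (Module.finrank ℂ (LinearMap.ker A.mulVecLin)) ≠ 0 := by
  classical
  set Z : Finset n := Finset.univ.filter fun i => hA.eigenvalues i = 0 with hZ
  have hg : Module.finrank ℂ (LinearMap.ker A.mulVecLin) = Z.card := aux_kerdim_eq hA
  set q : ℂ[X] := ∏ i ∈ Finset.univ.filter fun i => ¬ hA.eigenvalues i = 0,
      ((X : ℂ[X]) - C (RCLike.ofReal (hA.eigenvalues i))) with hq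
  have hsplit : A.charpoly = X ^ Z.card * q := by
    rw [aux_charpoly_hermitian hA,
      ← Finset.prod_filter_mul_prod_filter_not Finset.univ (fun i => hA.eigenvalues i = 0)]
    congr 1
    have : ∀ i ∈ Z, ((X : ℂ[X]) - C (RCLike.ofReal (hA.eigenvalues i))) = X := by
      intro i hi
      rw [hZ] at hi
      have h := (Finset.mem_filter.mp hi).2
      simp [h]
    rw [Finset.prod_congr rfl this, Finset.prod_const]
  have hq0 : q.coeff 0 ≠ 0 := by
    rw [coeff_zero_eq_eval_zero, hq, eval_prod]
    rw [Finset.prod_ne_zero_iff]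
    intro i hi
    have := (Finset.mem_filter.mp hi).2
    simp [this]
  constructor
  · intro j hj
    rw [hg] at hj
    rw [hsplit, coeff_X_pow_mul']
    simp [Nat.not_le_of_lt hj]
  · rw [hg, hsplit, coeff_X_pow_mul']
    simpa using hq0

/-! ### Real parts of complex multivariate polynomials -/

/-- coefficientwise real part of a complex multivariate polynomial -/
def rePoly {σ : Type*} (p : MvPolynomial σ ℂ) : MvPolynomial σ ℝ :=
  AddMonoidAlgebra.ofCoeff (Finsupp.mapRange Complex.re Complex.zero_re (AddMonoidAlgebra.coeff p))

lemma rePoly_coeff {σ : Type*} (p : MvPolynomial σ ℂ) (m : σ →₀ ℕ) :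
    MvPolynomial.coeff m (rePoly p) = (MvPolynomial.coeff m p).re :=
  rfl

lemma rePoly_add {σ : Type*} (p q : MvPolynomial σ ℂ) :
    rePoly (p + q) = rePoly p + rePoly q := by
  apply MvPolynomial.ext
  intro m
  simp [rePoly_coeff, MvPolynomial.coeff_add]

lemma rePoly_monomial {σ : Type*} (m : σ →₀ ℕ) (a : ℂ) :
    rePoly (MvPolynomial.monomial m a) = MvPolynomial.monomial m a.re := by
  apply MvPolynomial.ext
  intro m'
  classical
  rw [rePoly_coeff, MvPolynomial.coeff_monomial, MvPolynomial.coeff_monomial]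
  split <;> simp

lemma aux_eval_rePoly {σ : Type*} (p : MvPolynomial σ ℂ) (x : σ → ℝ) :
    MvPolynomial.eval x (rePoly p) = (MvPolynomial.eval (fun v => ((x v : ℝ) : ℂ)) p).re := by
  induction p using MvPolynomial.induction_on' with
  | monomial m a =>
    rw [rePoly_monomial, MvPolynomial.eval_monomial, MvPolynomial.eval_monomial]
    have h : (m.prod fun n e => ((x n : ℝ) : ℂ) ^ e) =
        (((m.prod fun n e => (x n) ^ e : ℝ)) : ℂ) := by
      rw [Finsupp.prod, Finsupp.prod]
      push_cast
      rfl
    rw [h]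
    simp [Complex.mul_re]
  | add p q hp hq =>
    rw [rePoly_add, map_add, map_add, Complex.add_re, hp, hq]

lemma aux_eval_map_conj {σ : Type*} (q : MvPolynomial σ ℂ) (x : σ → ℝ) :
    MvPolynomial.eval (fun v => ((x v : ℝ) : ℂ)) (MvPolynomial.map (starRingEnd ℂ) q) =
      starRingEnd ℂ (MvPolynomial.eval (fun v => ((x v : ℝ) : ℂ)) q) := by
  induction q using MvPolynomial.induction_on with
  | C a => simp
  | add p q hp hq => simp [hp, hq]
  | mul_X p i hp => simp [hp, Complex.conj_ofReal]

/-! ### Hermiticity of the QSAT Hamiltonian -/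

open Matrix in
lemma clauseProj_isHermitian {N : ℕ} (S : Finset (Fin N)) (φ : ({i // i ∈ S} → Fin 2) → ℂ) :
    (clauseProj S φ).IsHermitian := by
  have hsym : ∀ σ τ : Fin N → Fin 2,
      (∀ i : Fin N, i ∉ S → τ i = σ i) = (∀ i : Fin N, i ∉ S → σ i = τ i) := fun σ τ =>
    propext ⟨fun h i hi => (h i hi).symm, fun h i hi => (h i hi).symm⟩
  show (clauseProj S φ)ᴴ = clauseProj S φ
  ext σ τ
  rw [Matrix.conjTranspose_apply]
  show star ((if ∀ i : Fin N, i ∉ S → τ i = σ i then (1 : ℂ) else 0) *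
      φ (fun i => τ i.1) * (starRingEnd ℂ) (φ (fun i => σ i.1))) =
    (if ∀ i : Fin N, i ∉ S → σ i = τ i then (1 : ℂ) else 0) *
      φ (fun i => σ i.1) * (starRingEnd ℂ) (φ (fun i => τ i.1))
  simp only [hsym]
  simp only [starRingEnd_apply, star_mul', star_star, apply_ite (star : ℂ → ℂ), star_one,
    star_zero]
  ring

open Matrix in
lemma qsatHam_isHermitian {N M : ℕ} (S : Fin M → Finset (Fin N))
    (φ : ∀ m, ({i // i ∈ S m} → Fin 2) → ℂ) : (qsatHam S φ).IsHermitian := by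
  show (qsatHam S φ)ᴴ = qsatHam S φ
  rw [qsatHam, Matrix.conjTranspose_sum]
  exact Finset.sum_congr rfl fun m _ => clauseProj_isHermitian (S m) (φ m)

/-! ### The polynomial matrix -/

/-- The symbolic QSAT Hamiltonian, with entries polynomials in the real and imaginary
parts of the components of the clause vectors. -/
def qsatPolyMat {N M : ℕ} (S : Fin M → Finset (Fin N)) :
    Matrix (Fin N → Fin 2) (Fin N → Fin 2)
      (MvPolynomial ((Σ m : Fin M, ({i // i ∈ S m} → Fin 2)) × Bool) ℂ) :=
  ∑ m, fun σ τ =>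
    (if ∀ i : Fin N, i ∉ S m → σ i = τ i then 1 else 0) *
      (MvPolynomial.X (⟨⟨m, fun i => σ i.1⟩, true⟩) +
        MvPolynomial.C Complex.I * MvPolynomial.X (⟨⟨m, fun i => σ i.1⟩, false⟩)) *
      (MvPolynomial.X (⟨⟨m, fun i => τ i.1⟩, true⟩) -
        MvPolynomial.C Complex.I * MvPolynomial.X (⟨⟨m, fun i => τ i.1⟩, false⟩))

lemma qsatPolyMat_map {N M : ℕ} (S : Fin M → Finset (Fin N))
    (φ : ∀ m, ({i // i ∈ S m} → Fin 2) → ℂ) :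
    (qsatPolyMat S).map
        (MvPolynomial.eval (fun v => ((coords S φ v : ℝ) : ℂ))) = qsatHam S φ := by
  set ev := MvPolynomial.eval (fun v => ((coords S φ v : ℝ) : ℂ)) with hev
  ext σ τ
  rw [Matrix.map_apply, qsatPolyMat]
  erw [Matrix.sum_apply]
  rw [map_sum, qsatHam, Matrix.sum_apply]
  refine Finset.sum_congr rfl fun m _ => ?_
  show ev (_ * _ * _) = clauseProj (S m) (φ m) σ τ
  rw [map_mul, map_mul]
  have h1 : ev (if ∀ i : Fin N, i ∉ S m → σ i = τ i then 1 else 0) =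
      (if ∀ i : Fin N, i ∉ S m → σ i = τ i then (1 : ℂ) else 0) := by
    rw [apply_ite ev, map_one, map_zero]
  have h2 : ∀ x : {i // i ∈ S m} → Fin 2,
      ev (MvPolynomial.X (⟨⟨m, x⟩, true⟩) +
          MvPolynomial.C Complex.I * MvPolynomial.X (⟨⟨m, x⟩, false⟩)) = φ m x := by
    intro x
    rw [hev]
    simp only [map_add, map_mul, MvPolynomial.eval_X, MvPolynomial.eval_C, coords]
    apply Complex.ext <;> simp
  have h3 : ∀ x : {i // i ∈ S m} → Fin 2,
      ev (MvPolynomial.X (⟨⟨m, x⟩, true⟩) -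
          MvPolynomial.C Complex.I * MvPolynomial.X (⟨⟨m, x⟩, false⟩)) =
        (starRingEnd ℂ) (φ m x) := by
    intro x
    rw [hev]
    simp only [map_sub, map_mul, MvPolynomial.eval_X, MvPolynomial.eval_C, coords]
    apply Complex.ext <;> simp
  rw [h1, h2, h3]
  rfl

/-- existence of unit vectors -/
lemma aux_exists_unitVec {α : Type*} [Fintype α] [DecidableEq α] [Nonempty α] :
    ∃ φ : α → ℂ, IsUnitVec φ := by
  obtain ⟨a⟩ := (inferInstance : Nonempty α)
  refine ⟨fun x => if x = a then 1 else 0, ?_⟩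
  unfold IsUnitVec
  have h : ∀ x : α, Complex.normSq (if x = a then (1 : ℂ) else 0) =
      if x = a then (1 : ℝ) else 0 := by
    intro x; split <;> simp
  simp only [h]
  simp

/-- **Geometrization theorem.**  For every `k`-QSAT interaction hypergraph there is an
integer `R_G` such that every choice of (unit) clause vectors gives `dim ker H_φ ≥ R_G`,
and the set of choices with `dim ker H_φ > R_G` is contained in the zero locus of a
nonzero polynomial in the real and imaginary parts of the components of the `φ_m`. -/
theorem geometrization (N M k : ℕ) (S : Fin M → Finset (Fin N))
    (hS : ∀ m, (S m).card = k) :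
    ∃ R_G : ℕ,
      (∀ φ : ∀ m, ({i // i ∈ S m} → Fin 2) → ℂ,
        (∀ m, IsUnitVec (φ m)) → R_G ≤ kerDim S φ) ∧
      ∃ p : MvPolynomial ((Σ m : Fin M, ({i // i ∈ S m} → Fin 2)) × Bool) ℝ,
        p ≠ 0 ∧
        ∀ φ : ∀ m, ({i // i ∈ S m} → Fin 2) → ℂ,
          (∀ m, IsUnitVec (φ m)) → R_G < kerDim S φ →
            MvPolynomial.eval (coords S φ) p = 0 := by
  classical
  set Dset : Set ℕ :=
    {d | ∃ φ : ∀ m, ({i // i ∈ S m} → Fin 2) → ℂ,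
      (∀ m, IsUnitVec (φ m)) ∧ kerDim S φ = d} with hDset
  have hne : Dset.Nonempty := by
    have hφ : ∀ m : Fin M, ∃ ψ : ({i // i ∈ S m} → Fin 2) → ℂ, IsUnitVec ψ := fun m =>
      aux_exists_unitVec
    choose ψ hψ using hφ
    exact ⟨kerDim S ψ, ψ, hψ, rfl⟩
  set R_G := sInf Dset with hRG
  obtain ⟨φ₀, hφ₀u, hφ₀d⟩ : R_G ∈ Dset := Nat.sInf_mem hne
  refine ⟨R_G, fun φ hφ => Nat.sInf_le ⟨φ, hφ, rfl⟩, ?_⟩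
  -- the polynomial
  set Q : MvPolynomial ((Σ m : Fin M, ({i // i ∈ S m} → Fin 2)) × Bool) ℂ :=
    (qsatPolyMat S).charpoly.coeff R_G with hQ
  set p : MvPolynomial ((Σ m : Fin M, ({i // i ∈ S m} → Fin 2)) × Bool) ℝ :=
    rePoly (Q * MvPolynomial.map (starRingEnd ℂ) Q) with hp
  have key : ∀ φ : ∀ m, ({i // i ∈ S m} → Fin 2) → ℂ,
      MvPolynomial.eval (fun v => ((coords S φ v : ℝ) : ℂ)) Q =
        (qsatHam S φ).charpoly.coeff R_G := by
    intro φ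
    have h := Matrix.charpoly_map (qsatPolyMat S)
      (MvPolynomial.eval (fun v => ((coords S φ v : ℝ) : ℂ)))
    rw [qsatPolyMat_map S φ] at h
    rw [h, Polynomial.coeff_map, hQ]
  have keyp : ∀ φ : ∀ m, ({i // i ∈ S m} → Fin 2) → ℂ,
      MvPolynomial.eval (coords S φ) p =
        Complex.normSq ((qsatHam S φ).charpoly.coeff R_G) := by
    intro φ
    rw [hp, aux_eval_rePoly, map_mul, aux_eval_map_conj, key φ, Complex.mul_conj]
    simp
  refine ⟨p, ?_, ?_⟩
  · intro hp0
    have h1 := keyp φ₀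
    rw [hp0] at h1
    simp only [map_zero] at h1
    have h2 := (aux_coeff_hermitian (qsatHam_isHermitian S φ₀)).2
    have h3 : kerDim S φ₀ =
        Module.finrank ℂ (LinearMap.ker (qsatHam S φ₀).mulVecLin) := rfl
    rw [← h3, hφ₀d] at h2
    exact h2 (Complex.normSq_eq_zero.mp h1.symm)
  · intro φ hφ hgt
    rw [keyp φ]
    have h1 := (aux_coeff_hermitian (qsatHam_isHermitian S φ)).1 R_G
    have h3 : kerDim S φ =
        Module.finrank ℂ (LinearMap.ker (qsatHam S φ).mulVecLin) := rfl
    rw [← h3] at h1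
    rw [h1 hgt]
    simp

end
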